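/- Let V ≥ 0 satisfy e^{2V} − 1 ≤ 1/2, let μ > 0, and let m : ℝ³ → ℝ³ be a map such that for all y ≠ 0: (i) e^{-V}|y| ≤ |m(y)| ≤ e^{V}|y| and e^{-V}|y| ≤ |m(−y)| ≤ e^{V}|y|; (ii) e^{-V}|y|_{1/F} ≤ |m(±y)|_{1/F} ≤ e^{V}|y|_{1/F}; (iii) |m(−y) − y| ≤ e^{2V}(e^{2V} − 1)|y| and |m(y) + y| ≤ e^{2V}(e^{2V} − 1)|y|; (iv) |m(−y) + m(y)| ≤ e^{2V}(e^{2V} − 1) min(1, μ|y|) |y|; (v) | |m(−y)|_{1/F} − |m(y)|_{1/F} | ≤ e^{2V}(e^{2V} − 1) min(1, μ|y|) |y|_{1/F}. Then there exists a constant C_F depending only on F such that for all y ≠ 0: |K₀(y) − K₀(m(−y))| ≤ (C_F/|y|⁴) e^{6V}(e^{2V} − 1), and |K₀(m(y)) − K₀(m(−y))| ≤ (C_F/|y|⁴) e^{6V}(e^{2V} − 1) min(1, μ|y|). -/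

import Mathlib

open scoped Real

noncomputable section

/-- `|x|_{1/F}² = x₁² + x₂² + x₃²/F²`. -/
def normInvFsq (F : ℝ) (x : EuclideanSpace ℝ (Fin 3)) : ℝ :=
  x 0 ^ 2 + x 1 ^ 2 + x 2 ^ 2 / F ^ 2

/-- `|x|_{1/F} = √(x₁² + x₂² + x₃²/F²)`. -/
def normInvF (F : ℝ) (x : EuclideanSpace ℝ (Fin 3)) : ℝ :=
  Real.sqrt (normInvFsq F x)

/-- The kernel `K₀(y) = −(2/F²)(y₁² + y₂² − 3y₃²/F²)/|y|_{1/F}⁶`. -/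
def K₀ (F : ℝ) (y : EuclideanSpace ℝ (Fin 3)) : ℝ :=
  -(2 / F ^ 2) * (y 0 ^ 2 + y 1 ^ 2 - 3 * y 2 ^ 2 / F ^ 2) / (normInvFsq F y) ^ 3

namespace KDE

abbrev E3 := EuclideanSpace ℝ (Fin 3)

def gval (F : ℝ) (x : E3) : ℝ := -(2 / F ^ 2) * (x 0 ^ 2 + x 1 ^ 2 - 3 * x 2 ^ 2 / F ^ 2)

lemma K0_eq (F : ℝ) (x : E3) : K₀ F x = gval F x / (normInvFsq F x) ^ 3 := rfl

lemma norm_sq_eq (x : E3) : ‖x‖ ^ 2 = x 0 ^ 2 + x 1 ^ 2 + x 2 ^ 2 := by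
  rw [EuclideanSpace.norm_eq, Real.sq_sqrt (by positivity)]
  simp [Fin.sum_univ_three]

lemma abs_coord_le (x : E3) (i : Fin 3) : |x i| ≤ ‖x‖ := by
  rw [← Real.norm_eq_abs, EuclideanSpace.norm_eq]
  rw [show ‖x i‖ = Real.sqrt (‖x i‖ ^ 2) from (Real.sqrt_sq (norm_nonneg _)).symm]
  exact Real.sqrt_le_sqrt (Finset.single_le_sum (f := fun j => ‖x j‖ ^ 2) (fun j _ => sq_nonneg _) (Finset.mem_univ i))

lemma K0_neg (F : ℝ) (x : E3) : K₀ F (-x) = K₀ F x := by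
  simp [K₀, normInvFsq, PiLp.neg_apply]

lemma sqdiff_le (a b : E3) (i : Fin 3) :
    |a i ^ 2 - b i ^ 2| ≤ ‖a - b‖ * (‖a‖ + ‖b‖) := by
  have h1 : |a i - b i| ≤ ‖a - b‖ := by
    have := abs_coord_le (a - b) i
    rwa [PiLp.sub_apply] at this
  have h2 : |a i + b i| ≤ ‖a‖ + ‖b‖ :=
    (abs_add_le _ _).trans (add_le_add (abs_coord_le a i) (abs_coord_le b i))
  calc |a i ^ 2 - b i ^ 2| = |a i - b i| * |a i + b i| := by
        rw [← abs_mul]; ring_nf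
    _ ≤ ‖a - b‖ * (‖a‖ + ‖b‖) :=
        mul_le_mul h1 h2 (abs_nonneg _) (norm_nonneg _)

lemma gval_abs {F : ℝ} (hF : 0 < F) (b : E3) :
    |gval F b| ≤ 6 / F ^ 2 * normInvFsq F b := by
  have h22 : (0:ℝ) ≤ b 2 ^ 2 / F ^ 2 := by positivity
  have hX : |b 0 ^ 2 + b 1 ^ 2 - 3 * b 2 ^ 2 / F ^ 2| ≤ 3 * normInvFsq F b := by
    rw [abs_le]
    unfold normInvFsq
    have e3 : 3 * b 2 ^ 2 / F ^ 2 = 3 * (b 2 ^ 2 / F ^ 2) := by ring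
    constructor <;> linarith [sq_nonneg (b 0), sq_nonneg (b 1), h22]
  have : |gval F b| = 2 / F ^ 2 * |b 0 ^ 2 + b 1 ^ 2 - 3 * b 2 ^ 2 / F ^ 2| := by
    rw [gval, abs_mul, abs_neg, abs_of_pos (by positivity)]
  rw [this]
  calc 2 / F ^ 2 * |b 0 ^ 2 + b 1 ^ 2 - 3 * b 2 ^ 2 / F ^ 2|
      ≤ 2 / F ^ 2 * (3 * normInvFsq F b) :=
        mul_le_mul_of_nonneg_left hX (by positivity)
    _ = 6 / F ^ 2 * normInvFsq F b := by ring

lemma gdiff {F : ℝ} (hF : 0 < F) (hF1 : F ≤ 1) (a b : E3) :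
    |gval F a - gval F b| ≤ 10 / F ^ 4 * (‖a - b‖ * (‖a‖ + ‖b‖)) := by
  set P := ‖a - b‖ * (‖a‖ + ‖b‖) with hP
  have hP0 : (0:ℝ) ≤ P := mul_nonneg (norm_nonneg _) (by positivity)
  have h0 := sqdiff_le a b 0
  have h1 := sqdiff_le a b 1
  have h2 := sqdiff_le a b 2
  have hid : gval F a - gval F b =
      -(2 / F ^ 2) * ((a 0 ^ 2 - b 0 ^ 2) + (a 1 ^ 2 - b 1 ^ 2)) +
        (6 / F ^ 2 / F ^ 2) * (a 2 ^ 2 - b 2 ^ 2) := by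
    unfold gval; field_simp; ring
  have hF2 : F ^ 2 ≤ 1 := by nlinarith
  have hF4 : F ^ 4 ≤ F ^ 2 := by nlinarith [sq_nonneg F]
  have step1 : |gval F a - gval F b| ≤
      2 / F ^ 2 * (|a 0 ^ 2 - b 0 ^ 2| + |a 1 ^ 2 - b 1 ^ 2|) +
        6 / F ^ 2 / F ^ 2 * |a 2 ^ 2 - b 2 ^ 2| := by
    rw [hid]
    refine (abs_add_le _ _).trans (add_le_add ?_ ?_)
    · rw [abs_mul, abs_neg, abs_of_pos (show (0:ℝ) < 2 / F ^ 2 by positivity)]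
      exact mul_le_mul_of_nonneg_left (abs_add_le _ _) (by positivity)
    · have habs : |6 / F ^ 2 / F ^ 2 * (a 2 ^ 2 - b 2 ^ 2)| =
          6 / F ^ 2 / F ^ 2 * |a 2 ^ 2 - b 2 ^ 2| := by
        rw [abs_mul]
        congr 1
        exact abs_of_pos (by positivity)
      exact le_of_eq habs
  have step2 : 2 / F ^ 2 * (|a 0 ^ 2 - b 0 ^ 2| + |a 1 ^ 2 - b 1 ^ 2|) +
        6 / F ^ 2 / F ^ 2 * |a 2 ^ 2 - b 2 ^ 2| ≤
      2 / F ^ 2 * (P + P) + 6 / F ^ 2 / F ^ 2 * P := by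
    gcongr
  refine step1.trans (step2.trans ?_)
  have h42 : 4 / F ^ 2 ≤ 4 / F ^ 4 := by gcongr
  have := mul_le_mul_of_nonneg_right h42 hP0
  have hdd : 6 / F ^ 2 / F ^ 2 = 6 / F ^ 4 := by
    rw [div_div, ← pow_add]
  rw [hdd]
  calc 2 / F ^ 2 * (P + P) + 6 / F ^ 4 * P = 4 / F ^ 2 * P + 6 / F ^ 4 * P := by ring
    _ ≤ 4 / F ^ 4 * P + 6 / F ^ 4 * P := add_le_add_left this _
    _ = 10 / F ^ 4 * P := by ring

lemma ndiff {F : ℝ} (hF : 0 < F) (hF1 : F ≤ 1) (a b : E3) :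
    |normInvFsq F a - normInvFsq F b| ≤ 3 / F ^ 2 * (‖a - b‖ * (‖a‖ + ‖b‖)) := by
  set P := ‖a - b‖ * (‖a‖ + ‖b‖) with hP
  have hP0 : (0:ℝ) ≤ P := mul_nonneg (norm_nonneg _) (by positivity)
  have h0 := sqdiff_le a b 0
  have h1 := sqdiff_le a b 1
  have h2 := sqdiff_le a b 2
  have hid : normInvFsq F a - normInvFsq F b =
      ((a 0 ^ 2 - b 0 ^ 2) + (a 1 ^ 2 - b 1 ^ 2)) + (1 / F ^ 2) * (a 2 ^ 2 - b 2 ^ 2) := by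
    unfold normInvFsq; field_simp; ring
  have hF2 : F ^ 2 ≤ 1 := by nlinarith
  have step1 : |normInvFsq F a - normInvFsq F b| ≤
      (|a 0 ^ 2 - b 0 ^ 2| + |a 1 ^ 2 - b 1 ^ 2|) + 1 / F ^ 2 * |a 2 ^ 2 - b 2 ^ 2| := by
    rw [hid]
    refine (abs_add_le _ _).trans (add_le_add (abs_add_le _ _) ?_)
    rw [abs_mul, abs_of_pos (show (0:ℝ) < 1 / F ^ 2 by positivity)]
  have step2 : (|a 0 ^ 2 - b 0 ^ 2| + |a 1 ^ 2 - b 1 ^ 2|) + 1 / F ^ 2 * |a 2 ^ 2 - b 2 ^ 2| ≤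
      (P + P) + 1 / F ^ 2 * P := by gcongr
  refine step1.trans (step2.trans ?_)
  have h1F : 1 ≤ 1 / F ^ 2 := by rw [le_div_iff₀ (by positivity)]; nlinarith
  have hPP := mul_le_mul_of_nonneg_right h1F hP0
  have e : 3 / F ^ 2 * P = 1 / F ^ 2 * P + 1 / F ^ 2 * P + 1 / F ^ 2 * P := by ring
  linarith

lemma N_low {F : ℝ} (hF : 0 < F) (hF1 : F ≤ 1) (x : E3) :
    ‖x‖ ^ 2 ≤ normInvFsq F x := by
  rw [norm_sq_eq]
  unfold normInvFsq
  have : x 2 ^ 2 ≤ x 2 ^ 2 / F ^ 2 := by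
    rw [le_div_iff₀ (by positivity)]
    nlinarith [mul_le_mul_of_nonneg_left (show F ^ 2 ≤ 1 by nlinarith) (sq_nonneg (x 2))]
  linarith

lemma N_high {F : ℝ} (hF : 0 < F) (hF1 : F ≤ 1) (x : E3) :
    normInvFsq F x ≤ ‖x‖ ^ 2 / F ^ 2 := by
  have e : ‖x‖ ^ 2 / F ^ 2 = x 0 ^ 2 / F ^ 2 + x 1 ^ 2 / F ^ 2 + x 2 ^ 2 / F ^ 2 := by
    rw [norm_sq_eq]; ring
  have hsq : ∀ u : ℝ, u ^ 2 ≤ u ^ 2 / F ^ 2 := by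
    intro u
    rw [le_div_iff₀ (by positivity)]
    nlinarith [mul_le_mul_of_nonneg_left (show F ^ 2 ≤ 1 by nlinarith) (sq_nonneg u)]
  rw [e]
  unfold normInvFsq
  linarith [hsq (x 0), hsq (x 1)]

set_option maxHeartbeats 1000000 in
lemma core (F t A B ga gb D : ℝ) (hF : 0 < F) (hF1 : F ≤ 1) (ht : 0 < t) (hD : 0 ≤ D)
    (hsA : 2/3*t^2 ≤ A) (hAS : A ≤ 3/2*t^2/F^2)
    (hsB : 2/3*t^2 ≤ B) (hBS : B ≤ 3/2*t^2/F^2)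
    (hgb : |gb| ≤ 6/F^2*B)
    (hDg : |ga - gb| ≤ 25/F^4*D*t)
    (hDN : |A - B| ≤ 15/2/F^2*D*t) :
    |ga/A^3 - gb/B^3| ≤ 6000/F^10*D/t^5 := by
  have hA0 : (0:ℝ) < A := lt_of_lt_of_le (by positivity) hsA
  have hB0 : (0:ℝ) < B := lt_of_lt_of_le (by positivity) hsB
  have hid : ga/A^3 - gb/B^3 =
      (ga - gb)/A^3 + gb*((B-A)*(B^2+B*A+A^2))/(A^3*B^3) := by
    field_simp
    ring
  -- term 1
  have eA3 : ((2:ℝ)/3*t^2)^3 ≤ A^3 := pow_le_pow_left₀ (by positivity) hsA 3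
  have t1 : |(ga - gb)/A^3| ≤ (25/F^4*D*t)/((2/3*t^2)^3) := by
    rw [abs_div, abs_of_pos (pow_pos hA0 3)]
    exact div_le_div₀ (by positivity) hDg (by positivity) eA3
  have t1' : (25/F^4*D*t)/(((2:ℝ)/3*t^2)^3) = 675/8/F^4*D/t^5 := by
    field_simp
    ring
  -- term 2
  have hq0 : (0:ℝ) < B^2 + B*A + A^2 := by nlinarith [mul_pos hB0 hA0]
  have hABd : ((2:ℝ)/3*t^2)^6 ≤ A^3*B^3 := by
    have h1 : ((2:ℝ)/3*t^2)^3 ≤ B^3 := pow_le_pow_left₀ (by positivity) hsB 3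
    calc ((2:ℝ)/3*t^2)^6 = ((2:ℝ)/3*t^2)^3 * ((2:ℝ)/3*t^2)^3 := by ring
      _ ≤ A^3*B^3 := mul_le_mul eA3 h1 (by positivity) (le_of_lt (pow_pos hA0 3))
  have hnum : |gb| * (|B-A| * (B^2+B*A+A^2)) ≤
      (6/F^2*(3/2*t^2/F^2)) * ((15/2/F^2*D*t) * (3*(3/2*t^2/F^2)^2)) := by
    have hgb' : |gb| ≤ 6/F^2*(3/2*t^2/F^2) :=
      hgb.trans (mul_le_mul_of_nonneg_left hBS (by positivity))
    have hBA : |B - A| ≤ 15/2/F^2*D*t := by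
      rw [abs_sub_comm]; exact hDN
    have hquad : B^2+B*A+A^2 ≤ 3*(3/2*t^2/F^2)^2 := by
      have hS0 : (0:ℝ) ≤ 3/2*t^2/F^2 := by positivity
      have q1 : B^2 ≤ (3/2*t^2/F^2)^2 := pow_le_pow_left₀ hB0.le hBS 2
      have q2 : A^2 ≤ (3/2*t^2/F^2)^2 := pow_le_pow_left₀ hA0.le hAS 2
      have q3 : B*A ≤ (3/2*t^2/F^2)*(3/2*t^2/F^2) := mul_le_mul hBS hAS hA0.le hS0
      nlinarith
    exact mul_le_mul hgb' (mul_le_mul hBA hquad (by positivity) (by positivity))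
      (by positivity) (by positivity)
  have t2 : |gb*((B-A)*(B^2+B*A+A^2))/(A^3*B^3)| ≤
      ((6/F^2*(3/2*t^2/F^2)) * ((15/2/F^2*D*t) * (3*(3/2*t^2/F^2)^2))) / ((2/3*t^2)^6) := by
    rw [abs_div, abs_of_pos (mul_pos (pow_pos hA0 3) (pow_pos hB0 3)), abs_mul, abs_mul]
    rw [abs_of_pos hq0]
    exact div_le_div₀ (by positivity) hnum (by positivity) hABd
  have t2' : ((6/F^2*(3/2*t^2/F^2)) * ((15/2/F^2*D*t) * (3*(3/2*t^2/F^2)^2))) / (((2:ℝ)/3*t^2)^6)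
      = 2657205/512/(F^10)*D/t^5 := by
    field_simp
    ring
  have tri : |ga/A^3 - gb/B^3| ≤
      |(ga - gb)/A^3| + |gb*((B-A)*(B^2+B*A+A^2))/(A^3*B^3)| := by
    rw [hid]; exact abs_add_le _ _
  have hF10 : F^10 ≤ F^4 := by
    have h6 : F^6 ≤ 1 := pow_le_one₀ hF.le hF1
    calc F^10 = F^4 * F^6 := by ring
      _ ≤ F^4 * 1 := mul_le_mul_of_nonneg_left h6 (by positivity)
      _ = F^4 := mul_one _
  have final1 : (675:ℝ)/8/F^4*D/t^5 ≤ 675/8/F^10*D/t^5 := by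
    have h1 : (675:ℝ)/8/F^4 ≤ 675/8/F^10 := by gcongr
    have := mul_le_mul_of_nonneg_right h1 hD
    calc (675:ℝ)/8/F^4*D/t^5 = ((675:ℝ)/8/F^4*D)*(1/t^5) := by ring
      _ ≤ ((675:ℝ)/8/F^10*D)*(1/t^5) := mul_le_mul_of_nonneg_right this (by positivity)
      _ = 675/8/F^10*D/t^5 := by ring
  calc |ga/A^3 - gb/B^3| ≤ (25/F^4*D*t)/((2/3*t^2)^3) +
        ((6/F^2*(3/2*t^2/F^2)) * ((15/2/F^2*D*t) * (3*(3/2*t^2/F^2)^2))) / ((2/3*t^2)^6) :=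
      tri.trans (add_le_add t1 t2)
    _ = 675/8/F^4*D/t^5 + 2657205/512/(F^10)*D/t^5 := by rw [t1', t2']
    _ ≤ 675/8/F^10*D/t^5 + 2657205/512/(F^10)*D/t^5 := add_le_add_left final1 _
    _ ≤ 6000/F^10*D/t^5 := by
        have : (675:ℝ)/8 + 2657205/512 ≤ 6000 := by norm_num
        have h2 : ((675:ℝ)/8 + 2657205/512)/F^10*D/t^5 ≤ 6000/F^10*D/t^5 := by
          gcongr
        calc (675:ℝ)/8/F^10*D/t^5 + 2657205/512/(F^10)*D/t^5
            = ((675:ℝ)/8 + 2657205/512)/F^10*D/t^5 := by ring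
          _ ≤ 6000/F^10*D/t^5 := h2

lemma K0_diff (F t : ℝ) (hF : 0 < F) (hF1 : F ≤ 1) (ht : 0 < t) (a b : E3)
    (ha1 : 2/3*t^2 ≤ ‖a‖^2) (ha2 : ‖a‖^2 ≤ 3/2*t^2)
    (hb1 : 2/3*t^2 ≤ ‖b‖^2) (hb2 : ‖b‖^2 ≤ 3/2*t^2) :
    |K₀ F a - K₀ F b| ≤ 6000/F^10 * ‖a - b‖ / t^5 := by
  have hna : ‖a‖ ≤ 5/4*t := by nlinarith [norm_nonneg a, ht]
  have hnb : ‖b‖ ≤ 5/4*t := by nlinarith [norm_nonneg b, ht]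
  have hsum : ‖a‖ + ‖b‖ ≤ 5/2*t := by linarith
  have hD : (0:ℝ) ≤ ‖a - b‖ := norm_nonneg _
  have hP : ‖a - b‖*(‖a‖+‖b‖) ≤ ‖a - b‖*(5/2*t) := mul_le_mul_of_nonneg_left hsum hD
  have hDg : |gval F a - gval F b| ≤ 25/F^4*‖a - b‖*t := by
    refine (gdiff hF hF1 a b).trans ?_
    calc 10/F^4*(‖a - b‖*(‖a‖+‖b‖)) ≤ 10/F^4*(‖a - b‖*(5/2*t)) :=
          mul_le_mul_of_nonneg_left hP (by positivity)
      _ = 25/F^4*‖a - b‖*t := by ring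
  have hDN : |normInvFsq F a - normInvFsq F b| ≤ 15/2/F^2*‖a - b‖*t := by
    refine (ndiff hF hF1 a b).trans ?_
    calc 3/F^2*(‖a - b‖*(‖a‖+‖b‖)) ≤ 3/F^2*(‖a - b‖*(5/2*t)) :=
          mul_le_mul_of_nonneg_left hP (by positivity)
      _ = 15/2/F^2*‖a - b‖*t := by ring
  have hsA : 2/3*t^2 ≤ normInvFsq F a := ha1.trans (N_low hF hF1 a)
  have hAS : normInvFsq F a ≤ 3/2*t^2/F^2 := (N_high hF hF1 a).trans (by gcongr)
  have hsB : 2/3*t^2 ≤ normInvFsq F b := hb1.trans (N_low hF hF1 b)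
  have hBS : normInvFsq F b ≤ 3/2*t^2/F^2 := (N_high hF hF1 b).trans (by gcongr)
  rw [K0_eq, K0_eq]
  exact core F t (normInvFsq F a) (normInvFsq F b) (gval F a) (gval F b) ‖a - b‖
    hF hF1 ht hD hsA hAS hsB hBS (gval_abs hF b) hDg hDN

end KDE

open KDE

/-- Kernel difference estimates (Proposition 6.3): under the displacement estimates (i)–(v)
for `m`, one has `|K₀(y) − K₀(m(−y))| ≤ (C_F/|y|⁴) e^{6V}(e^{2V} − 1)` and
`|K₀(m(y)) − K₀(m(−y))| ≤ (C_F/|y|⁴) e^{6V}(e^{2V} − 1) min(1, μ|y|)`. -/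
theorem kernel_difference_estimates
    (F : ℝ) (hF : F ∈ Set.Ioc (0 : ℝ) 1) :
    ∃ C > (0 : ℝ), ∀ (V μ : ℝ), 0 ≤ V → Real.exp (2 * V) - 1 ≤ 1 / 2 → 0 < μ →
      ∀ m : EuclideanSpace ℝ (Fin 3) → EuclideanSpace ℝ (Fin 3),
        (∀ y : EuclideanSpace ℝ (Fin 3), y ≠ 0 →
          (Real.exp (-V) * ‖y‖ ≤ ‖m y‖ ∧ ‖m y‖ ≤ Real.exp V * ‖y‖) ∧
          (Real.exp (-V) * ‖y‖ ≤ ‖m (-y)‖ ∧ ‖m (-y)‖ ≤ Real.exp V * ‖y‖)) →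
        (∀ y : EuclideanSpace ℝ (Fin 3), y ≠ 0 →
          (Real.exp (-V) * normInvF F y ≤ normInvF F (m y) ∧
            normInvF F (m y) ≤ Real.exp V * normInvF F y) ∧
          (Real.exp (-V) * normInvF F y ≤ normInvF F (m (-y)) ∧
            normInvF F (m (-y)) ≤ Real.exp V * normInvF F y)) →
        (∀ y : EuclideanSpace ℝ (Fin 3), y ≠ 0 →
          ‖m (-y) - y‖ ≤ Real.exp (2 * V) * (Real.exp (2 * V) - 1) * ‖y‖ ∧
          ‖m y + y‖ ≤ Real.exp (2 * V) * (Real.exp (2 * V) - 1) * ‖y‖) →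
        (∀ y : EuclideanSpace ℝ (Fin 3), y ≠ 0 →
          ‖m (-y) + m y‖ ≤
            Real.exp (2 * V) * (Real.exp (2 * V) - 1) * min 1 (μ * ‖y‖) * ‖y‖) →
        (∀ y : EuclideanSpace ℝ (Fin 3), y ≠ 0 →
          |normInvF F (m (-y)) - normInvF F (m y)| ≤
            Real.exp (2 * V) * (Real.exp (2 * V) - 1) * min 1 (μ * ‖y‖) * normInvF F y) →
        ∀ y : EuclideanSpace ℝ (Fin 3), y ≠ 0 →
          |K₀ F y - K₀ F (m (-y))| ≤
            (C / ‖y‖ ^ 4) * Real.exp (6 * V) * (Real.exp (2 * V) - 1) ∧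
          |K₀ F (m y) - K₀ F (m (-y))| ≤
            (C / ‖y‖ ^ 4) * Real.exp (6 * V) * (Real.exp (2 * V) - 1) * min 1 (μ * ‖y‖) := by
  obtain ⟨hF0, hF1⟩ := hF
  refine ⟨6000/F^10, by positivity, ?_⟩
  intro V μ hV hVe hμ m h1 h2 h3 h4 h5 y hy
  have ht : (0:ℝ) < ‖y‖ := norm_pos_iff.mpr hy
  have hE2a : (1:ℝ) ≤ Real.exp (2*V) := Real.one_le_exp (by linarith)
  have hE2b : Real.exp (2*V) ≤ 3/2 := by linarith
  have hE2pos : (0:ℝ) < Real.exp (2*V) := Real.exp_pos _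
  have h0E : (0:ℝ) ≤ Real.exp (2*V) - 1 := by linarith
  have hE6 : Real.exp (2*V) ≤ Real.exp (6*V) := Real.exp_le_exp.mpr (by linarith)
  have hinv : (2:ℝ)/3 ≤ (Real.exp (2*V))⁻¹ := by
    have h := mul_inv_cancel₀ (ne_of_gt hE2pos)
    nlinarith [inv_pos.mpr hE2pos]
  have hexpneg2 : Real.exp (-V) ^ 2 = (Real.exp (2*V))⁻¹ := by
    rw [sq, ← Real.exp_add, show -V + -V = -(2*V) by ring, Real.exp_neg]
  have hexppos2 : Real.exp V ^ 2 = Real.exp (2*V) := by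
    rw [sq, ← Real.exp_add, show V + V = 2*V by ring]
  have sqbounds : ∀ x : E3, Real.exp (-V) * ‖y‖ ≤ ‖x‖ → ‖x‖ ≤ Real.exp V * ‖y‖ →
      2/3*‖y‖^2 ≤ ‖x‖^2 ∧ ‖x‖^2 ≤ 3/2*‖y‖^2 := by
    intro x hlo hhi
    constructor
    · have h := pow_le_pow_left₀ (by positivity) hlo 2
      rw [mul_pow, hexpneg2] at h
      have h' := mul_le_mul_of_nonneg_right hinv (sq_nonneg ‖y‖)
      linarith
    · have h := pow_le_pow_left₀ (norm_nonneg x) hhi 2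
      rw [mul_pow, hexppos2] at h
      have h' := mul_le_mul_of_nonneg_right hE2b (sq_nonneg ‖y‖)
      linarith
  obtain ⟨hmy, hmny⟩ := h1 y hy
  have hb := sqbounds (m (-y)) hmny.1 hmny.2
  have ha : 2/3*‖y‖^2 ≤ ‖y‖^2 ∧ ‖y‖^2 ≤ 3/2*‖y‖^2 := by
    constructor <;> nlinarith [sq_nonneg ‖y‖]
  have hmin0 : (0:ℝ) ≤ min 1 (μ * ‖y‖) := le_min zero_le_one (by positivity)
  have hmin1 : min 1 (μ * ‖y‖) ≤ 1 := min_le_left _ _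
  constructor
  · -- first estimate
    have main1 := K0_diff F ‖y‖ hF0 hF1 ht y (m (-y)) ha.1 ha.2 hb.1 hb.2
    have hd1 : ‖y - m (-y)‖ ≤ Real.exp (2*V)*(Real.exp (2*V)-1)*‖y‖ := by
      rw [norm_sub_rev]; exact (h3 y hy).1
    calc |K₀ F y - K₀ F (m (-y))| ≤ 6000/F^10 * ‖y - m (-y)‖ / ‖y‖^5 := main1
      _ ≤ 6000/F^10 * (Real.exp (2*V)*(Real.exp (2*V)-1)*‖y‖) / ‖y‖^5 := by gcongr
      _ = 6000/F^10 / ‖y‖^4 * Real.exp (2*V) * (Real.exp (2*V)-1) := by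
          field_simp
      _ ≤ 6000/F^10 / ‖y‖^4 * Real.exp (6*V) * (Real.exp (2*V)-1) := by gcongr
  · -- second estimate
    rw [← K0_neg F (m y)]
    have hlo : Real.exp (-V) * ‖y‖ ≤ ‖-(m y)‖ := by rw [norm_neg]; exact hmy.1
    have hhi : ‖-(m y)‖ ≤ Real.exp V * ‖y‖ := by rw [norm_neg]; exact hmy.2
    have ha2 := sqbounds (-(m y)) hlo hhi
    have main2 := K0_diff F ‖y‖ hF0 hF1 ht (-(m y)) (m (-y)) ha2.1 ha2.2 hb.1 hb.2
    have hd2 : ‖-(m y) - m (-y)‖ = ‖m (-y) + m y‖ := by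
      rw [show -(m y) - m (-y) = -(m (-y) + m y) by abel, norm_neg]
    have hd3 : ‖-(m y) - m (-y)‖ ≤
        Real.exp (2*V)*(Real.exp (2*V)-1)*min 1 (μ*‖y‖)*‖y‖ := by
      rw [hd2]; exact h4 y hy
    calc |K₀ F (-(m y)) - K₀ F (m (-y))| ≤ 6000/F^10 * ‖-(m y) - m (-y)‖ / ‖y‖^5 := main2
      _ ≤ 6000/F^10 * (Real.exp (2*V)*(Real.exp (2*V)-1)*min 1 (μ*‖y‖)*‖y‖) / ‖y‖^5 := by
          gcongr
      _ = 6000/F^10 / ‖y‖^4 * Real.exp (2*V) * (Real.exp (2*V)-1) * min 1 (μ*‖y‖) := by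
          field_simp
      _ ≤ 6000/F^10 / ‖y‖^4 * Real.exp (6*V) * (Real.exp (2*V)-1) * min 1 (μ*‖y‖) := by
          gcongr
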